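/- Let p = 2, so F is the field with two elements, and let f : F^n → F be in layered canalizing form with canalizing depth d, where the core function P_C has no canalizing variables. If x_s is a variable in the support of P_C, then the number of transitions changed by deleting x_s satisfies #{x ∈ F^n : f(x_1, …, x_{s−1}, 0, x_{s+1}, …, x_n) ≠ f(x)} ≤ 2^{n − d − 1}. -/

import Mathlib

open Finset

/-- Indicator function of the complement of `S`: `Qt S x = 1` if `x ∉ S`, `0` if `x ∈ S`. -/
def Qt {F : Type*} [Fintype F] [DecidableEq F] [Zero F] [One F] (S : Finset F) (x : F) : F :=
  if x ∈ S then 0 else 1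

/-- `g` actually depends on (is essential in) its `i`-th variable. -/
def DependsOnCoord {F : Type*} (n : ℕ) (g : (Fin n → F) → F) (i : Fin n) : Prop :=
  ∃ x y : Fin n → F, (∀ j, j ≠ i → x j = y j) ∧ g x ≠ g y

/-- `g` is canalizing in its `i`-th variable with canalizing input set `S`
(a nonempty proper subset of `F`) and canalizing output `b`. -/
def Canalizing {F : Type*} [Fintype F] [DecidableEq F] (n : ℕ) (g : (Fin n → F) → F)
    (i : Fin n) (S : Finset F) (b : F) : Prop :=
  S.Nonempty ∧ S ≠ Finset.univ ∧ ∀ x : Fin n → F, x i ∈ S → g x = b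

/-- `f` is 1-canalizing in its `i`-th variable with canalizing input set `S`
(a nonempty proper subset of `F`) and canalizing output `b`: `f = b` whenever `x i ∈ S`,
and on `x i ∉ S` the value of `f` is given by a single function of the remaining variables
which is not identically `b`. -/
def OneCanalizing {F : Type*} [Fintype F] [DecidableEq F] (n : ℕ) (f : (Fin n → F) → F)
    (i : Fin n) (S : Finset F) (b : F) : Prop :=
  S.Nonempty ∧ S ≠ Finset.univ ∧
  (∀ x : Fin n → F, x i ∈ S → f x = b) ∧
  (∀ x y : Fin n → F, x i ∉ S → y i ∉ S → (∀ j, j ≠ i → x j = y j) → f x = f y) ∧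
  (∃ x : Fin n → F, x i ∉ S ∧ f x ≠ b)

/-- Nested evaluation `M₁(M₂(⋯(M_r · P + B_r)⋯) + B₂) + B₁`. -/
def nestEval {F : Type*} [Mul F] [Add F] : List (F × F) → F → F
  | [], P => P
  | (m, b) :: t, P => m * nestEval t P + b

/-- Layered canalizing form data for a function of `n` variables with `r ≥ 1` layers:
pairwise disjoint layer blocks, nonempty proper canalizing input sets for the
layer variables, layer constants `B` with the last one nonzero, and a core function
`P_C` of the remaining variables having no 1-canalizing variables. -/
structure LayeredForm (F : Type*) [Field F] [Fintype F] [DecidableEq F] (n r : ℕ) where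
  hr : 0 < r
  layer : Fin r → Finset (Fin n)
  disj : ∀ i j : Fin r, i ≠ j → Disjoint (layer i) (layer j)
  S : Fin n → Finset F
  Sne : ∀ i : Fin r, ∀ v ∈ layer i, (S v).Nonempty
  Spr : ∀ i : Fin r, ∀ v ∈ layer i, S v ≠ Finset.univ
  B : Fin r → F
  Blast : B ⟨r - 1, Nat.sub_lt hr Nat.one_pos⟩ ≠ 0
  PC : (Fin n → F) → F
  PCvars : ∀ i : Fin r, ∀ v ∈ layer i, ¬ DependsOnCoord n PC v
  PCnc : ¬ ∃ (v : Fin n) (S' : Finset F) (b : F), OneCanalizing n PC v S' b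

/-- The product `M_i = ∏_{v ∈ L_i} Q̃_{S_v}(x_v)` over the `i`-th layer. -/
def LayeredForm.M {F : Type*} [Field F] [Fintype F] [DecidableEq F] {n r : ℕ}
    (L : LayeredForm F n r) (i : Fin r) (x : Fin n → F) : F :=
  ∏ v ∈ L.layer i, Qt (L.S v) (x v)

/-- The function determined by a layered canalizing form:
`f(x) = M₁(M₂(⋯(M_r · P_C + B_r)⋯) + B₂) + B₁`. -/
def LayeredForm.eval {F : Type*} [Field F] [Fintype F] [DecidableEq F] {n r : ℕ}
    (L : LayeredForm F n r) (x : Fin n → F) : F :=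
  nestEval (List.ofFn fun i => (L.M i x, L.B i)) (L.PC x)

/-- The number of state-space transitions changed when the input `s` of `f`
is replaced by the constant `a` (edge deletion when `a = 0`). -/
def chCount {F : Type*} [Fintype F] [DecidableEq F] {n : ℕ}
    (f : (Fin n → F) → F) (s : Fin n) (a : F) : ℕ :=
  (Finset.univ.filter fun x : Fin n → F => f (Function.update x s a) ≠ f x).card

private lemma nestEval_ne_aux {F : Type*} [Field F] :
    ∀ (l : List (F × F)) (P P' : F), nestEval l P ≠ nestEval l P' →
      P ≠ P' ∧ ∀ q ∈ l, q.1 ≠ 0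
  | [], P, P', h => ⟨h, by simp⟩
  | (m, b) :: t, P, P', h => by
    have hm : m ≠ 0 := by rintro rfl; simp [nestEval] at h
    have ht : nestEval t P ≠ nestEval t P' := by
      intro he; exact h (by simp [nestEval, he])
    obtain ⟨h1, h2⟩ := nestEval_ne_aux t P P' ht
    refine ⟨h1, ?_⟩
    intro q hq
    rcases List.mem_cons.mp hq with rfl | hq
    · exact hm
    · exact h2 q hq

/-- In the Boolean case `p = 2`, the edge-deletion bound for a variable in
the support of a core function with no canalizing variables reduces to `2 ^ (n - d - 1)`. -/
theorem stmt10 {F : Type*} [Field F] [Fintype F] [DecidableEq F] (hp : Fintype.card F = 2)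
    {n r : ℕ} (f : (Fin n → F) → F) (L : LayeredForm F n r) (hf : f = L.eval)
    (hnc : ∀ v : Fin n, DependsOnCoord n L.PC v →
      ¬ ∃ (S' : Finset F) (b : F), Canalizing n L.PC v S' b)
    (s : Fin n) (hsupp : DependsOnCoord n L.PC s) :
    chCount f s 0 ≤ 2 ^ (n - (∑ i : Fin r, (L.layer i).card) - 1) := by
  classical
  -- In a two-element field, nonzero elements coincide
  have two_elt : ∀ a b : F, a ≠ 0 → b ≠ 0 → a = b := by
    intro a b ha hb
    have hcard : (Finset.univ \ {0} : Finset F).card ≤ 1 := by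
      rw [Finset.card_sdiff_of_subset (by simp)]
      simp [hp, Finset.card_univ]
    exact Finset.card_le_one.mp hcard a (by simp [ha]) b (by simp [hb])
  -- Elements outside a nonempty proper subset of a two-element field coincide
  have out_unique : ∀ v : Fin n, (L.S v).Nonempty → L.S v ≠ Finset.univ →
      ∀ a b : F, a ∉ L.S v → b ∉ L.S v → a = b := by
    intro v hne hpr a b ha hb
    have h2 : (L.S v).card < 2 := by
      have := Finset.card_lt_card (Finset.ssubset_univ_iff.mpr hpr)
      simpa [hp, Finset.card_univ] using this
    have hcard : (Finset.univ \ L.S v : Finset F).card ≤ 1 := by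
      rw [Finset.card_sdiff_of_subset (Finset.subset_univ _)]
      have h1 : 1 ≤ (L.S v).card := hne.card_pos
      rw [Finset.card_univ, hp]
      omega
    exact Finset.card_le_one.mp hcard a (by simp [ha]) b (by simp [hb])
  set D : Finset (Fin n) := Finset.univ.biUnion L.layer with hD
  have hDcard : D.card = ∑ i : Fin r, (L.layer i).card :=
    Finset.card_biUnion (fun i _ j _ hij => L.disj i j hij)
  have hsD : s ∉ D := by
    intro hs
    rw [Finset.mem_biUnion] at hs
    obtain ⟨i, -, hi⟩ := hs
    exact L.PCvars i s hi hsupp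
  -- key implication: a changed transition forces x s ≠ 0 and x v ∉ S v on D
  have key : ∀ x : Fin n → F, f (Function.update x s 0) ≠ f x →
      x s ≠ 0 ∧ ∀ v ∈ D, x v ∉ L.S v := by
    intro x hx
    have hMeq : ∀ i : Fin r, L.M i (Function.update x s 0) = L.M i x := by
      intro i
      unfold LayeredForm.M
      refine Finset.prod_congr rfl fun v hv => ?_
      have hvs : v ≠ s := by
        rintro rfl
        exact hsD (Finset.mem_biUnion.mpr ⟨i, Finset.mem_univ i, hv⟩)
      rw [Function.update_of_ne hvs]
    have hx' : nestEval (List.ofFn fun i => (L.M i x, L.B i)) (L.PC (Function.update x s 0)) ≠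
        nestEval (List.ofFn fun i => (L.M i x, L.B i)) (L.PC x) := by
      have hl : (List.ofFn fun i => (L.M i (Function.update x s 0), L.B i)) =
          (List.ofFn fun i => (L.M i x, L.B i)) := by
        congr 1
        funext i
        rw [hMeq]
      rw [hf] at hx
      unfold LayeredForm.eval at hx
      rwa [hl] at hx
    obtain ⟨hPC, hM⟩ := nestEval_ne_aux _ _ _ hx'
    constructor
    · intro hxs
      apply hPC
      rw [show Function.update x s 0 = x by rw [← hxs, Function.update_eq_self]]
    · intro v hv
      rw [Finset.mem_biUnion] at hv
      obtain ⟨i, -, hi⟩ := hv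
      have hMi : L.M i x ≠ 0 :=
        hM (L.M i x, L.B i) (List.mem_ofFn.mpr ⟨i, rfl⟩)
      have := (Finset.prod_ne_zero_iff.mp hMi) v hi
      intro hmem
      apply this
      simp [Qt, hmem]
  -- the changed set injects into functions on the complement of `insert s D`
  set E : Finset (Fin n) := insert s D with hE
  have hEcard : E.card = D.card + 1 := Finset.card_insert_of_notMem hsD
  have hbound : chCount f s 0 ≤ (Finset.univ : Finset ((Eᶜ : Finset (Fin n)) → F)).card := by
    unfold chCount
    apply Finset.card_le_card_of_injOn (fun x (v : (Eᶜ : Finset (Fin n))) => x v)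
    · intro x _
      exact Finset.mem_univ _
    · intro x hxmem y hymem hxy
      simp only [Finset.mem_coe, Finset.mem_filter] at hxmem hymem
      obtain ⟨hxs, hxD⟩ := key x hxmem.2
      obtain ⟨hys, hyD⟩ := key y hymem.2
      funext v
      by_cases hvE : v ∈ E
      · rw [hE, Finset.mem_insert] at hvE
        rcases hvE with rfl | hvD
        · exact two_elt _ _ hxs hys
        · obtain ⟨i, -, hi⟩ := Finset.mem_biUnion.mp hvD
          exact out_unique v (L.Sne i v hi) (L.Spr i v hi) _ _ (hxD v hvD) (hyD v hvD)
      · exact congrFun hxy ⟨v, Finset.mem_compl.mpr hvE⟩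
  have hcardfun : (Finset.univ : Finset ((Eᶜ : Finset (Fin n)) → F)).card =
      2 ^ (n - (∑ i : Fin r, (L.layer i).card) - 1) := by
    rw [Finset.card_univ, Fintype.card_fun, Fintype.card_coe, hp, Finset.card_compl,
      Fintype.card_fin, hEcard, hDcard]
    congr 1
  calc chCount f s 0 ≤ _ := hbound
    _ = _ := hcardfun
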